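/- For every integer n ≥ 2, the subfield of K generated by F and c_n equals the subfield of K generated by F and the two elements b_{n−1}, a_n; that is, F(c_n) = F(b_{n−1}, a_n). -/

import Mathlib

/-- The smallest subfield of `K` containing the subfield `F` and the set `S`. -/
def fieldAdjoin {K : Type*} [Field K] (F : Subfield K) (S : Set K) : Subfield K :=
  Subfield.closure (↑F ∪ S)

theorem stmt_7
    (p : ℕ) (hp : p.Prime) (e : ℕ) (he : 0 < e) (q : ℕ) (hq : q = p ^ e)
    {K : Type*} [Field K] [CharP K p]
    (a b c : ℕ → K)
    (ha0 : ∀ n, 1 ≤ n → a n ≠ 0)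
    (ha1 : ∀ n, 1 ≤ n → a n ≠ 1)
    (ha2 : ∀ n, 1 ≤ n → a n ^ q + a n - 1 ≠ 0)
    (hR1 : ∀ n, 1 ≤ n → (1 - a (n + 1)) * a n = a (n + 1) ^ q * (a n ^ q + a n - 1))
    (hR2 : ∀ n, 1 ≤ n → c n ^ (q - 1) * a n = a n - 1)
    (hR3 : ∀ n, 1 ≤ n → b n ^ (q - 1) * a n = -(a n ^ q + a n - 1))
    (hb0 : ∀ n, 1 ≤ n → b n ≠ 0)
    (hc0 : ∀ n, 1 ≤ n → c n ≠ 0)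
    (F : Subfield K) (hFfin : Finite F) (hFcard : Nat.card F = q ^ 3)
    : ∀ n, 2 ≤ n →
      fieldAdjoin F {c n} = fieldAdjoin F {b (n - 1), a n} := by
  classical
  have hq2 : 2 ≤ q := by
    subst hq
    exact Nat.one_lt_pow he.ne' hp.one_lt
  have hq3 : 1 < q ^ 3 := by
    calc 1 < q := hq2
    _ ≤ q ^ 3 := Nat.le_self_pow (by norm_num) q
  -- any solution of x^(q-1) = 1 lies in F
  have hF : ∀ x : K, x ^ (q - 1) = 1 → x ∈ F := by
    intro x hx
    have hx3 : x ^ (q ^ 3) = x := by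
      obtain ⟨k, rfl⟩ : ∃ k, q = k + 1 := ⟨q - 1, by omega⟩
      simp only [Nat.add_sub_cancel] at hx
      have h3 : (k + 1) ^ 3 = k * ((k + 1) ^ 2 + (k + 1) + 1) + 1 := by ring
      rw [h3, pow_add, pow_mul, hx, one_pow, one_mul, pow_one]
    set P : Polynomial K := Polynomial.X ^ (q ^ 3) - Polynomial.X with hP
    have hP0 : P ≠ 0 := by
      intro h
      have h2 := congrArg (fun p => Polynomial.coeff p (q ^ 3)) h
      simp [hP, Polynomial.coeff_X_pow, Polynomial.coeff_X, hq3.ne] at h2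
    have hdeg : P.natDegree ≤ q ^ 3 := by
      refine le_trans (Polynomial.natDegree_sub_le _ _) ?_
      simp only [Polynomial.natDegree_X_pow, Polynomial.natDegree_X]
      omega
    haveI : Fintype F := Fintype.ofFinite F
    have hcardF : Fintype.card F = q ^ 3 := by rw [← Nat.card_eq_fintype_card, hFcard]
    have hFsub : (F : Set K) ⊆ ↑P.roots.toFinset := by
      intro y hy
      have h1 : (⟨y, hy⟩ : F) ^ (q ^ 3) = ⟨y, hy⟩ := by
        rw [← hcardF]; exact FiniteField.pow_card _
      have hyq : y ^ (q ^ 3) = y := by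
        have := congrArg Subtype.val h1
        simpa using this
      simp only [Finset.coe_sort_coe, Multiset.mem_toFinset, Finset.mem_coe]
      rw [Polynomial.mem_roots hP0]
      simp [Polynomial.IsRoot, hP, hyq, sub_eq_zero]
    have hncardF : (F : Set K).ncard = q ^ 3 := by
      rw [← Nat.card_coe_set_eq, ← hFcard]
      simp
    have hcard2 : (↑P.roots.toFinset : Set K).ncard ≤ (F : Set K).ncard := by
      rw [Set.ncard_coe_finset, hncardF]
      calc P.roots.toFinset.card ≤ Multiset.card P.roots := Multiset.toFinset_card_le _
        _ ≤ P.natDegree := Polynomial.card_roots' P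
        _ ≤ q ^ 3 := hdeg
    have heq : (F : Set K) = ↑P.roots.toFinset :=
      Set.eq_of_subset_of_ncard_le hFsub hcard2 (Finset.finite_toSet _)
    have hxmem : x ∈ (↑P.roots.toFinset : Set K) := by
      simp only [Finset.coe_sort_coe, Multiset.mem_toFinset, Finset.mem_coe]
      rw [Polynomial.mem_roots hP0]
      simp [Polynomial.IsRoot, hP, hx3, sub_eq_zero]
    rw [← heq] at hxmem
    exact hxmem
  intro n hn
  obtain ⟨m, rfl⟩ : ∃ m, n = m + 1 := ⟨n - 1, by omega⟩
  have hm1 : 1 ≤ m := by omega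
  have hn1 : 1 ≤ m + 1 := by omega
  simp only [Nat.add_sub_cancel]
  have ham : a m ≠ 0 := ha0 m hm1
  have han : a (m + 1) ≠ 0 := ha0 _ hn1
  have hbm : b m ≠ 0 := hb0 m hm1
  have hcn : c (m + 1) ≠ 0 := hc0 _ hn1
  have h1 := hR1 m hm1
  have h2 := hR2 (m + 1) hn1
  have h3 := hR3 m hm1
  have key : c (m + 1) ^ (q - 1) * a (m + 1) = a (m + 1) ^ q * b m ^ (q - 1) := by
    apply mul_right_cancel₀ ham
    calc c (m + 1) ^ (q - 1) * a (m + 1) * a m = (a (m + 1) - 1) * a m := by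
          linear_combination a m * h2
      _ = -((1 - a (m + 1)) * a m) := by ring
      _ = -(a (m + 1) ^ q * (a m ^ q + a m - 1)) := by rw [h1]
      _ = a (m + 1) ^ q * (-(a m ^ q + a m - 1)) := by ring
      _ = a (m + 1) ^ q * (b m ^ (q - 1) * a m) := by rw [h3]
      _ = a (m + 1) ^ q * b m ^ (q - 1) * a m := by ring
  have hpow : a (m + 1) ^ q = a (m + 1) ^ (q - 1) * a (m + 1) := by
    conv_lhs => rw [show q = (q - 1) + 1 by omega]
    rw [pow_succ]
  have key2 : c (m + 1) ^ (q - 1) = (a (m + 1) * b m) ^ (q - 1) := by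
    apply mul_right_cancel₀ han
    rw [mul_pow]
    calc c (m + 1) ^ (q - 1) * a (m + 1) = a (m + 1) ^ q * b m ^ (q - 1) := key
      _ = a (m + 1) ^ (q - 1) * b m ^ (q - 1) * a (m + 1) := by rw [hpow]; ring
  set z := c (m + 1) / (a (m + 1) * b m) with hz
  have hab : a (m + 1) * b m ≠ 0 := mul_ne_zero han hbm
  have hz1 : z ^ (q - 1) = 1 := by
    rw [hz, div_pow, key2, div_self (pow_ne_zero _ hab)]
  have hzF : z ∈ F := hF z hz1
  have hz0 : z ≠ 0 := div_ne_zero hcn hab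
  have hcz : c (m + 1) = z * (a (m + 1) * b m) := by
    rw [hz, div_mul_cancel₀ _ hab]
  have hA : a (m + 1) = (1 - c (m + 1) ^ (q - 1))⁻¹ := by
    have hmul : a (m + 1) * (1 - c (m + 1) ^ (q - 1)) = 1 := by linear_combination -h2
    exact eq_inv_of_mul_eq_one_left (by linear_combination hmul)
  have hB : b m = c (m + 1) * (z * a (m + 1))⁻¹ := by
    rw [hz]
    field_simp
  have hFle : ∀ (S : Set K) (x : K), x ∈ F → x ∈ fieldAdjoin F S := fun S x hx =>
    Subfield.subset_closure (Or.inl hx)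
  have hgen : ∀ (S : Set K) (x : K), x ∈ S → x ∈ fieldAdjoin F S := fun S x hx =>
    Subfield.subset_closure (Or.inr hx)
  have hc1 : c (m + 1) ∈ fieldAdjoin F {c (m + 1)} := hgen _ _ rfl
  have ha1' : a (m + 1) ∈ fieldAdjoin F {c (m + 1)} := by
    rw [hA]; exact inv_mem (sub_mem (one_mem _) (pow_mem hc1 _))
  have hb1 : b m ∈ fieldAdjoin F {c (m + 1)} := by
    rw [hB]
    exact mul_mem hc1 (inv_mem (mul_mem (hFle _ _ hzF) ha1'))
  have hb2 : b m ∈ fieldAdjoin F {b m, a (m + 1)} := hgen _ _ (Set.mem_insert _ _)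
  have ha2' : a (m + 1) ∈ fieldAdjoin F {b m, a (m + 1)} :=
    hgen _ _ (Set.mem_insert_of_mem _ rfl)
  have hc2 : c (m + 1) ∈ fieldAdjoin F {b m, a (m + 1)} := by
    rw [hcz]
    exact mul_mem (hFle _ _ hzF) (mul_mem ha2' hb2)
  apply le_antisymm
  · exact Subfield.closure_le.mpr (Set.union_subset (fun x hx => hFle _ x hx)
      (by simpa using hc2))
  · refine Subfield.closure_le.mpr (Set.union_subset (fun x hx => hFle _ x hx) ?_)
    rintro x (rfl | rfl)
    · exact hb1
    · exact ha1'
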